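/- Let n ≥ 1, let 0 ≤ k ≤ n−1, and set l := max{k, n−k−1}. The i-lexical matchings M^i_{n,k} for i = 0, 1, …, l are pairwise disjoint and their union is the set of all edges of Q_n joining a vertex of level k to a vertex of level k+1. -/

import Mathlib

/-- The Hamming weight of a bitstring of length `n`, i.e., its number of 1-bits. -/
def wt {n : ℕ} (x : Fin n → Bool) : ℕ := (Finset.univ.filter fun i => x i = true).card

/-- The `n`-dimensional hypercube: vertices are bitstrings of length `n`, two of which are
adjacent iff they differ in exactly one position. -/
def cube (n : ℕ) : SimpleGraph (Fin n → Bool) where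
  Adj x y := hammingDist x y = 1
  symm := ⟨fun x y (h : hammingDist x y = 1) => by show hammingDist y x = 1; rwa [hammingDist_comm]⟩
  loopless := ⟨fun x (h : hammingDist x x = 1) => by simp [hammingDist_self] at h⟩
/-- The number of 1-bits among the first `j` bits of `x` (interpreting a bitstring as a
lattice path, this determines the height after `j` steps). -/
def onesUpTo {n : ℕ} (x : Fin n → Bool) (j : ℕ) : ℕ :=
  (Finset.univ.filter fun i : Fin n => i.val < j ∧ x i = true).card

/-- The height of the lattice path of `x` after `j` steps: number of 1s minus number of 0s
among the first `j` bits (appended steps beyond the length of `x` being down-steps). -/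
def hgt {n : ℕ} (x : Fin n → Bool) (j : ℕ) : ℤ := 2 * (onesUpTo x j : ℤ) - (j : ℤ)

/-- The length of the extended lattice path `x^↑`: if the final height `2·wt x − n` is `≥ −1`,
down-steps are appended until the path ends at height `−1` (total length `2·wt x + 1`);
otherwise nothing is appended. -/
def extLen {n : ℕ} (x : Fin n → Bool) : ℕ := max n (2 * wt x + 1)

/-- Position `j` (0-indexed) of the extended path `x^↑` is a down-step: either it is a 0-bit
of `x`, or one of the appended down-steps. -/
def isDownStep {n : ℕ} (x : Fin n → Bool) (j : ℕ) : Prop :=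
  j < extLen x ∧ ∀ h : j < n, x ⟨j, h⟩ = false

/-- The `i`-lexical matching `M^i_{n,k}` between levels `k` and `k+1` of the `n`-cube, as a
relation: `lexUp n k i x y` holds iff `x` lies in level `k` and `y = M^{i,↑}_{n,k}(x)`, i.e.,
`y` is obtained from `x` by flipping to 1 the 0-bit at the `i`-th down-step of `x^↑` in the
order of decreasing starting height, ties broken from right to left, counting from 0,
provided this down-step lies within `x`. -/
def lexUp (n k i : ℕ) (x y : Fin n → Bool) : Prop :=
  wt x = k ∧ ∃ d : ℕ, d < n ∧ isDownStep x d ∧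
    ({j : ℕ | isDownStep x j ∧ (hgt x d < hgt x j ∨ (hgt x j = hgt x d ∧ d < j))}).ncard = i ∧
    y = fun t : Fin n => if t.val = d then true else x t
open Finset

lemma wt_le {n : ℕ} (x : Fin n → Bool) : wt x ≤ n := by
  classical
  simpa [wt] using (Finset.card_filter_le (Finset.univ : Finset (Fin n)) (fun i => x i = true))

lemma card_false {n : ℕ} (x : Fin n → Bool) :
    (Finset.univ.filter fun i : Fin n => x i = false).card = n - wt x := by
  classical
  have h := Finset.card_filter_add_card_filter_not (s := (Finset.univ : Finset (Fin n)))
      (p := fun i : Fin n => x i = true)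
  simp only [Bool.not_eq_true, Finset.card_univ, Fintype.card_fin] at h
  have hle := wt_le x
  unfold wt at hle ⊢
  omega

def DF {n : ℕ} (x : Fin n → Bool) : Finset ℕ :=
  (Finset.range (extLen x)).filter (fun j => ∀ i : Fin n, (i : ℕ) = j → x i = false)

lemma mem_DF {n : ℕ} (x : Fin n → Bool) (j : ℕ) : j ∈ DF x ↔ isDownStep x j := by
  classical
  simp only [DF, Finset.mem_filter, Finset.mem_range, isDownStep]
  constructor
  · rintro ⟨h1, h2⟩
    exact ⟨h1, fun h => h2 ⟨j, h⟩ rfl⟩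
  · rintro ⟨h1, h2⟩
    refine ⟨h1, fun i hi => ?_⟩
    have : i = ⟨j, hi ▸ i.isLt⟩ := Fin.ext hi
    rw [this]; exact h2 _

lemma card_DF {n : ℕ} (x : Fin n → Bool) :
    (DF x).card = max n (2 * wt x + 1) - wt x := by
  classical
  have hsplit : DF x =
      ((Finset.univ.filter fun i : Fin n => x i = false).image Fin.val) ∪
        Finset.Ico n (extLen x) := by
    ext j
    simp only [DF, Finset.mem_filter, Finset.mem_range, Finset.mem_union, Finset.mem_image,
      Finset.mem_Ico, Finset.mem_univ, true_and]
    constructor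
    · rintro ⟨h1, h2⟩
      rcases lt_or_ge j n with hj | hj
      · exact Or.inl ⟨⟨j, hj⟩, h2 ⟨j, hj⟩ rfl, rfl⟩
      · exact Or.inr ⟨hj, h1⟩
    · rintro (⟨i, hi, rfl⟩ | ⟨h1, h2⟩)
      · refine ⟨lt_of_lt_of_le i.isLt (le_max_left _ _), fun i' hi' => ?_⟩
        have : i' = i := Fin.ext hi'
        rwa [this]
      · exact ⟨h2, fun i hi => absurd (hi ▸ i.isLt) (not_lt.mpr h1)⟩
  have hdisj : Disjoint ((Finset.univ.filter fun i : Fin n => x i = false).image Fin.val)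
      (Finset.Ico n (extLen x)) := by
    rw [Finset.disjoint_left]
    rintro a ha hb
    simp only [Finset.mem_image] at ha
    obtain ⟨i, _, rfl⟩ := ha
    exact absurd (Finset.mem_Ico.mp hb).1 (not_le.mpr i.isLt)
  rw [hsplit, Finset.card_union_of_disjoint hdisj,
    Finset.card_image_of_injective _ Fin.val_injective, card_false, Nat.card_Ico]
  have := wt_le x
  unfold extLen
  omega

lemma wt_flip {n : ℕ} (x : Fin n → Bool) (a : Fin n) (ha : x a = false) :
    wt (fun t : Fin n => if (t : ℕ) = (a : ℕ) then true else x t) = wt x + 1 := by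
  classical
  unfold wt
  have hset : (Finset.univ.filter fun i : Fin n =>
        (if (i : ℕ) = (a : ℕ) then true else x i) = true)
      = insert a (Finset.univ.filter fun i : Fin n => x i = true) := by
    ext i
    simp only [Finset.mem_filter, Finset.mem_insert, Finset.mem_univ, true_and]
    by_cases h : (i : ℕ) = (a : ℕ)
    · have hi : i = a := Fin.ext h
      simp [h, hi]
    · have hi : i ≠ a := fun e => h (by rw [e])
      simp [h, hi]
  rw [hset, Finset.card_insert_of_notMem (by simp [ha])]

lemma hdist_flip {n : ℕ} (x : Fin n → Bool) (a : Fin n) (ha : x a = false) :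
    hammingDist x (fun t : Fin n => if (t : ℕ) = (a : ℕ) then true else x t) = 1 := by
  classical
  have hset : (Finset.univ.filter fun i : Fin n =>
        x i ≠ (if (i : ℕ) = (a : ℕ) then true else x i)) = {a} := by
    ext i
    simp only [Finset.mem_filter, Finset.mem_univ, true_and, Finset.mem_singleton]
    by_cases h : (i : ℕ) = (a : ℕ)
    · have hi : i = a := Fin.ext h
      simp [h, hi, ha]
    · have hi : i ≠ a := fun e => h (by rw [e])
      simp [h, hi]
  unfold hammingDist
  rw [hset, Finset.card_singleton]

/-- For `0 ≤ k ≤ n−1` and `l := max{k, n−k−1}`, the lexical matchings `M^i_{n,k}` for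
`i = 0, 1, …, l` are pairwise disjoint, and their union is the set of all edges of the
`n`-cube joining a vertex of level `k` to a vertex of level `k+1`. -/
theorem lexical_matchings_partition (n k : ℕ) (hn : 1 ≤ n) (hk : k ≤ n - 1) :
    (∀ i j, i ≤ max k (n - k - 1) → j ≤ max k (n - k - 1) → i ≠ j →
      ∀ x y : Fin n → Bool, lexUp n k i x y → ¬ lexUp n k j x y) ∧
    (∀ x y : Fin n → Bool,
      (wt x = k ∧ wt y = k + 1 ∧ (cube n).Adj x y) ↔
        ∃ i ≤ max k (n - k - 1), lexUp n k i x y) := by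
  classical
  constructor
  · rintro i j hi hj hij x y ⟨hw, d, hd, hds, hcard, hy⟩ ⟨hw', d', hd', hds', hcard', hy'⟩
    have hdd : d = d' := by
      by_contra hne
      have e1 : y ⟨d, hd⟩ = true := by rw [hy]; simp
      have e2 : y ⟨d, hd⟩ = false := by
        rw [hy']; simp only []
        have : ¬ ((⟨d, hd⟩ : Fin n) : ℕ) = d' := hne
        simp [this, hds.2 hd]
      rw [e1] at e2; exact Bool.noConfusion e2
    subst hdd
    exact hij (hcard ▸ hcard' ▸ rfl)
  · intro x y
    constructor
    · rintro ⟨hwx, hwy, hadj⟩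
      have hadj' : (Finset.univ.filter fun i : Fin n => x i ≠ y i).card = 1 := hadj
      obtain ⟨a, ha⟩ := Finset.card_eq_one.mp hadj'
      have hmem : ∀ i : Fin n, x i ≠ y i ↔ i = a := by
        intro i
        rw [← Finset.mem_singleton, ← ha, Finset.mem_filter]
        simp
      have hne : x a ≠ y a := (hmem a).mpr rfl
      have hoff : ∀ i : Fin n, i ≠ a → x i = y i := by
        intro i h
        by_contra hc
        exact h ((hmem i).mp hc)
      have hxa : x a = false := by
        by_contra hxa'
        have hxa : x a = true := by revert hxa'; cases x a <;> simp
        have hya : y a = false := by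
          revert hne; rw [hxa]; cases y a <;> simp
        have hx : x = fun t : Fin n => if (t : ℕ) = (a : ℕ) then true else y t := by
          funext t
          by_cases h : (t : ℕ) = (a : ℕ)
          · have ht : t = a := Fin.ext h
            simp [h, ht, hxa]
          · have ht : t ≠ a := fun e => h (by rw [e])
            simp [h, hoff t ht]
        have : wt x = wt y + 1 := by rw [hx]; exact wt_flip y a hya
        omega
      have hya : y a = true := by revert hne; rw [hxa]; cases y a <;> simp
      have hy : y = fun t : Fin n => if (t : ℕ) = (a : ℕ) then true else x t := by
        funext t
        by_cases h : (t : ℕ) = (a : ℕ)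
        · have ht : t = a := Fin.ext h
          simp [h, ht, hya]
        · have ht : t ≠ a := fun e => h (by rw [e])
          simp [h, (hoff t ht).symm]
      have hdsa : isDownStep x (a : ℕ) := by
        refine ⟨lt_of_lt_of_le a.isLt (le_max_left _ _), fun h => ?_⟩
        have : (⟨(a : ℕ), h⟩ : Fin n) = a := rfl
        rw [this]; exact hxa
      set S : Set ℕ := {j : ℕ | isDownStep x j ∧
        (hgt x (a : ℕ) < hgt x j ∨ (hgt x j = hgt x (a : ℕ) ∧ (a : ℕ) < j))} with hS
      have hsub : S ⊆ ↑((DF x).erase (a : ℕ)) := by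
        intro j hj
        refine Finset.mem_coe.mpr (Finset.mem_erase.mpr ⟨?_, (mem_DF x j).mpr hj.1⟩)
        rcases hj.2 with h | h
        · rintro rfl; exact lt_irrefl _ h
        · rintro rfl; exact lt_irrefl _ h.2
      have hncard : S.ncard ≤ ((DF x).erase (a : ℕ)).card := by
        have := Set.ncard_le_ncard hsub (Finset.finite_toSet _)
        rwa [Set.ncard_coe_finset] at this
      have hamem : (a : ℕ) ∈ DF x := (mem_DF x _).mpr hdsa
      have hbound : S.ncard ≤ max k (n - k - 1) := by
        rw [Finset.card_erase_of_mem hamem, card_DF, hwx] at hncard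
        have hkn : k ≤ n := by omega
        rcases le_total n (2 * k + 1) with h | h
        · rw [max_eq_right h] at hncard
          have : max k (n - k - 1) ≥ k := le_max_left _ _
          omega
        · rw [max_eq_left h] at hncard
          have : max k (n - k - 1) ≥ n - k - 1 := le_max_right _ _
          omega
      exact ⟨S.ncard, hbound, hwx, (a : ℕ), a.isLt, hdsa, rfl, hy⟩
    · rintro ⟨i, hi, hw, d, hdn, hds, hcard, hy⟩
      have hxd : x ⟨d, hdn⟩ = false := hds.2 hdn
      refine ⟨hw, ?_, ?_⟩
      · rw [hy]
        have := wt_flip x ⟨d, hdn⟩ hxd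
        rw [hw] at this
        exact this
      · show hammingDist x y = 1
        rw [hy]
        exact hdist_flip x ⟨d, hdn⟩ hxd
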